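/- Let θ ∈ [1, 3/2], let U be uniform on [0, ln 2], and define Y = (2/(θ·e^U)) if U ≤ ln(2/θ), and Y = (3/(θ·e^U)) if U > ln(2/θ). Then E[Y] = (1/(2·ln 2))·(1 + 1/θ). -/

import Mathlib

open MeasureTheory Real intervalIntegral

theorem stmt_15 (θ : ℝ) (hθ : θ ∈ Set.Icc (1:ℝ) (3 / 2)) :
    (∫ u in (0:ℝ)..(Real.log 2),
        if u ≤ Real.log (2 / θ) then 2 / (θ * Real.exp u) else 3 / (θ * Real.exp u)) /
        Real.log 2 =
      (1 / (2 * Real.log 2)) * (1 + 1 / θ) := by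
  obtain ⟨h1, h2⟩ := hθ
  have hθ0 : 0 < θ := lt_of_lt_of_le one_pos h1
  set c := Real.log (2 / θ) with hc
  have hec : Real.exp c = 2 / θ := Real.exp_log (by positivity)
  have hc0 : 0 ≤ c := Real.log_nonneg (by rw [le_div_iff₀ hθ0]; linarith)
  have hc2 : c ≤ Real.log 2 :=
    Real.log_le_log (by positivity) (by rw [div_le_iff₀ hθ0]; nlinarith)
  have key : ∀ u : ℝ, (if u ≤ c then 2 / (θ * Real.exp u) else 3 / (θ * Real.exp u))
      = 3/θ * Real.exp (-u) - Set.indicator {x | x ≤ c} (fun u => 1/θ * Real.exp (-u)) u := by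
    intro u
    have h0 := (Real.exp_pos u).ne'
    by_cases h : u ≤ c
    · rw [if_pos h, Set.indicator_of_mem (show u ∈ {x | x ≤ c} from h), Real.exp_neg]
      field_simp
      ring
    · rw [if_neg h, Set.indicator_of_notMem (show u ∉ {x | x ≤ c} from h), Real.exp_neg]
      field_simp
      ring
  simp only [key]
  have hint1 : IntervalIntegrable (fun u => 3/θ * Real.exp (-u)) volume 0 (Real.log 2) := by
    apply Continuous.intervalIntegrable
    continuity
  have hint2 : IntervalIntegrable (Set.indicator {x | x ≤ c} (fun u => 1/θ * Real.exp (-u)))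
      volume 0 (Real.log 2) := by
    constructor <;>
    · apply MeasureTheory.Integrable.indicator
      · exact Continuous.integrableOn_Ioc (by continuity)
      · exact measurableSet_Iic
  rw [intervalIntegral.integral_sub hint1 hint2,
    intervalIntegral.integral_indicator (show c ∈ Set.Icc (0:ℝ) (Real.log 2) from ⟨hc0, hc2⟩)]
  have hexp : ∀ a b : ℝ, ∫ u in a..b, Real.exp (-u) = Real.exp (-a) - Real.exp (-b) := by
    intro a b
    have h := intervalIntegral.integral_comp_neg (a := a) (b := b) Real.exp
    rw [h, integral_exp]
  rw [intervalIntegral.integral_const_mul, intervalIntegral.integral_const_mul, hexp, hexp]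
  have e1 : Real.exp (-Real.log 2) = 1/2 := by
    rw [Real.exp_neg, Real.exp_log]; norm_num; norm_num
  have e2 : Real.exp (-c) = θ/2 := by
    rw [Real.exp_neg, hec]
    field_simp
  have hl2 : Real.log 2 ≠ 0 := by
    have := Real.log_pos (by norm_num : (1:ℝ) < 2)
    linarith
  rw [e1, e2, neg_zero, Real.exp_zero]
  field_simp
  ring
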